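/- Newton iteration with quadratic error: suppose (a_n)_{n≥0} are nonnegative reals with a_{n+1} ≤ c_n a_n² where c_n = 2^{−1}Cσ_n^{−τ}, σ_n = (σ/6)2^{−n}, each c_n ≥ 1, and a_0 ≤ c_0 ε where ε = (η/2)Π_{k≥0} c_k^{−2^{−k}} satisfies 2εΠ c_k^{2^{−k}} ≤ 1 (i.e. η ≤ 1). Then a_n ≤ (ε Π_{k≥0} c_k^{2^{−k}})^{2ⁿ} for all n ≥ 0 and Σ_{n≥0} a_n ≤ η. -/

import Mathlib

open Real

/-- Newton iteration with quadratic error: if `a_{n+1} ≤ c_n a_n²` with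
`c_n = 2⁻¹ C σ_n^{-τ}`, `σ_n = (σ/6) 2^{-n}`, `c_n ≥ 1`, `a_0 ≤ c_0 ε` where
`ε = (η/2) Π c_k^{-2^{-k}}` and `2 ε Π c_k^{2^{-k}} ≤ 1`, then
`a_n ≤ (ε Π c_k^{2^{-k}})^{2ⁿ}` for all `n` and `Σ a_n ≤ η`. -/
theorem stmt_8 (C τ σ η : ℝ) (hC : 2 ≤ C) (hτ : 1 ≤ τ) (hσ0 : 0 < σ) (hσ1 : σ ≤ 1)
    (hη0 : 0 < η) (hη1 : η ≤ 1)
    (σs : ℕ → ℝ) (hσs : ∀ m, σs m = (σ / 6) * (2 : ℝ) ^ (-(m : ℝ)))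
    (c : ℕ → ℝ) (hc : ∀ m, c m = 2⁻¹ * C * (σs m) ^ (-τ)) (hc1 : ∀ m, 1 ≤ c m)
    (a : ℕ → ℝ) (ha0 : ∀ m, 0 ≤ a m)
    (hrec : ∀ m, a (m + 1) ≤ c m * (a m) ^ 2)
    (P : ℝ) (hP : P = ∏' k : ℕ, (c k) ^ ((2 : ℝ) ^ (-(k : ℝ))))
    (ε : ℝ) (hε : ε = (η / 2) * ∏' k : ℕ, (c k) ^ (-((2 : ℝ) ^ (-(k : ℝ)))))
    (ha1 : a 0 ≤ c 0 * ε) (hsmall : 2 * ε * P ≤ 1) :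
    (∀ m, a m ≤ (ε * P) ^ (2 ^ m)) ∧ (∑' m : ℕ, a m) ≤ η := by
  have hcpos : ∀ m, (0:ℝ) < c m := fun m => lt_of_lt_of_le one_pos (hc1 m)
  have hσspos : ∀ m, (0:ℝ) < σs m := by
    intro m; rw [hσs m]
    positivity
  -- the exponents
  set s : ℕ → ℝ := fun k => (2:ℝ) ^ (-(k:ℝ)) with hsdef
  have hs_eq : ∀ k, s k = (2⁻¹:ℝ) ^ k := by
    intro k
    simp only [hsdef]
    rw [Real.rpow_neg (by norm_num), Real.rpow_natCast, inv_pow]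
  have hspos : ∀ k, (0:ℝ) < s k := fun k => Real.rpow_pos_of_pos (by norm_num) _
  -- logs
  set L : ℕ → ℝ := fun k => Real.log (c k) * s k with hLdef
  have hL0 : ∀ k, 0 ≤ L k := fun k =>
    mul_nonneg (Real.log_nonneg (hc1 k)) (hspos k).le
  have hlogc : ∀ k, Real.log (c k) =
      (Real.log (2⁻¹ * C) - τ * Real.log (σ / 6)) + (τ * Real.log 2) * k := by
    intro k
    rw [hc k, Real.log_mul (by positivity) (ne_of_gt (Real.rpow_pos_of_pos (hσspos k) _)),
      Real.log_rpow (hσspos k), hσs k,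
      Real.log_mul (by positivity) (ne_of_gt (Real.rpow_pos_of_pos (by norm_num) _)),
      Real.log_rpow (by norm_num)]
    ring
  have hLsum : Summable L := by
    set A := Real.log (2⁻¹ * C) - τ * Real.log (σ / 6)
    set B := τ * Real.log 2
    have h1 : Summable (fun k : ℕ => A * (2⁻¹:ℝ) ^ k) :=
      (summable_geometric_of_lt_one (by norm_num) (by norm_num)).mul_left A
    have h2 : Summable (fun k : ℕ => B * ((k:ℝ) * (2⁻¹:ℝ) ^ k)) := by
      refine Summable.mul_left B ?_
      have := summable_pow_mul_geometric_of_norm_lt_one (R := ℝ) 1 (r := 2⁻¹) (by norm_num)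
      simpa using this
    have := h1.add h2
    refine this.congr fun k => ?_
    simp only [hLdef, hlogc k, hs_eq k]
    ring
  set S := ∑' k, L k with hSdef
  have hS0 : 0 ≤ S := tsum_nonneg hL0
  -- P = exp S
  have hprod : HasProd (fun k => (c k) ^ (s k)) (Real.exp S) := by
    have h := hLsum.hasSum.rexp
    refine h.congr_fun fun k => ?_
    simp only [Function.comp, hLdef]
    rw [Real.rpow_def_of_pos (hcpos k)]
  have hPexp : P = Real.exp S := by rw [hP]; exact hprod.tprod_eq
  have hprodinv : HasProd (fun k => (c k) ^ (-(s k))) (Real.exp (-S)) := by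
    have h := (hLsum.neg.hasSum).rexp
    have hst : (∑' k, -L k) = -S := by rw [tsum_neg]
    rw [hst] at h
    refine h.congr_fun fun k => ?_
    simp only [Function.comp, hLdef]
    rw [Real.rpow_def_of_pos (hcpos k)]
    ring_nf
  have hεexp : ε = (η / 2) * Real.exp (-S) := by rw [hε]; rw [hprodinv.tprod_eq]
  have hεP : ε * P = η / 2 := by
    rw [hεexp, hPexp, mul_assoc, ← Real.exp_add, neg_add_cancel, Real.exp_zero, mul_one]
  have hεpos : 0 < ε := by rw [hεexp]; positivity
  have hPpos : 0 < P := by rw [hPexp]; positivity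
  -- finite partial products
  set Q : ℕ → ℝ := fun m => ∏ k ∈ Finset.range (m + 1), (c k) ^ (s k) with hQdef
  have hQpos : ∀ m, 0 < Q m := fun m =>
    Finset.prod_pos fun k _ => Real.rpow_pos_of_pos (hcpos k) _
  have hQle : ∀ m, Q m ≤ P := by
    intro m
    have : Q m = Real.exp (∑ k ∈ Finset.range (m + 1), L k) := by
      rw [Real.exp_sum]
      refine Finset.prod_congr rfl fun k _ => ?_
      rw [hLdef, Real.rpow_def_of_pos (hcpos k)]
    rw [this, hPexp]
    exact Real.exp_le_exp.mpr (hLsum.sum_le_tsum _ (fun k _ => hL0 k))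
  -- monotonicity of c
  have hcmono : ∀ m, c m ≤ c (m + 1) := by
    intro m
    rw [hc m, hc (m + 1)]
    have hbase : σs (m + 1) ≤ σs m := by
      rw [hσs m, hσs (m + 1)]
      have : (2:ℝ) ^ (-((m:ℝ) + 1)) ≤ (2:ℝ) ^ (-(m:ℝ)) :=
        Real.rpow_le_rpow_of_exponent_le (by norm_num) (by linarith)
      have h6 : (0:ℝ) < σ / 6 := by positivity
      push_cast
      nlinarith
    have := Real.rpow_le_rpow_of_nonpos (hσspos (m + 1)) hbase (by linarith : -τ ≤ 0)
    have hC2 : (0:ℝ) ≤ 2⁻¹ * C := by positivity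
    nlinarith
  -- main induction
  have key : ∀ m, a m ≤ (ε * Q m) ^ (2 ^ m) := by
    intro m
    induction m with
    | zero =>
      have : Q 0 = c 0 := by
        show (∏ k ∈ Finset.range (0 + 1), c k ^ s k) = c 0
        rw [Finset.prod_range_one, show s 0 = 1 from by rw [hs_eq]; norm_num, Real.rpow_one]
      simpa [this, mul_comm] using ha1
    | succ m ih =>
      have hQsucc : Q (m + 1) = Q m * (c (m + 1)) ^ (s (m + 1)) := by
        simp [hQdef, Finset.prod_range_succ]
      have hcs : ((c (m + 1)) ^ (s (m + 1))) ^ ((2:ℕ) ^ (m + 1)) = c (m + 1) := by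
        rw [← Real.rpow_natCast ((c (m+1)) ^ (s (m+1))) ((2:ℕ) ^ (m+1)),
          ← Real.rpow_mul (hcpos (m+1)).le]
        have hone : s (m + 1) * (((2:ℕ) ^ (m + 1) : ℕ) : ℝ) = 1 := by
          rw [hs_eq, inv_pow]
          push_cast
          rw [inv_mul_cancel₀ (by positivity)]
        rw [hone, Real.rpow_one]
      have h1 : a (m + 1) ≤ c m * ((ε * Q m) ^ (2 ^ m)) ^ 2 := by
        calc a (m + 1) ≤ c m * (a m) ^ 2 := hrec m
          _ ≤ c m * ((ε * Q m) ^ (2 ^ m)) ^ 2 := by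
              apply mul_le_mul_of_nonneg_left _ (hcpos m).le
              exact pow_le_pow_left₀ (ha0 m) ih 2
      have h2 : ((ε * Q m) ^ (2 ^ m)) ^ 2 = (ε * Q m) ^ (2 ^ (m + 1)) := by
        rw [← pow_mul, pow_succ]
      rw [h2] at h1
      calc a (m + 1) ≤ c m * (ε * Q m) ^ (2 ^ (m + 1)) := h1
        _ ≤ c (m + 1) * (ε * Q m) ^ (2 ^ (m + 1)) := by
            exact mul_le_mul_of_nonneg_right (hcmono m)
              (pow_nonneg (mul_nonneg hεpos.le (hQpos m).le) _)
        _ = (ε * Q (m + 1)) ^ (2 ^ (m + 1)) := by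
            conv_rhs => rw [hQsucc,
              show ε * (Q m * c (m + 1) ^ s (m + 1))
                = (ε * Q m) * c (m + 1) ^ s (m + 1) from by ring,
              mul_pow, hcs]
            ring
  have hbound : ∀ m, a m ≤ (ε * P) ^ (2 ^ m) := by
    intro m
    refine (key m).trans (pow_le_pow_left₀ (mul_nonneg hεpos.le (hQpos m).le) ?_ _)
    exact mul_le_mul_of_nonneg_left (hQle m) hεpos.le
  refine ⟨hbound, ?_⟩
  -- sum bound
  have hhalf : ε * P ≤ 1 / 2 := by linarith [hεP, hη1]
  have hgeom : ∀ m, a m ≤ (η / 2) * (2⁻¹ : ℝ) ^ m := by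
    intro m
    refine (hbound m).trans ?_
    rw [hεP]
    have h2m : 2 ^ m = (2 ^ m - 1) + 1 := by
      have := Nat.one_le_two_pow (n := m)
      omega
    rw [h2m, pow_succ]
    have hle1 : (η / 2 : ℝ) ^ (2 ^ m - 1) ≤ (2⁻¹ : ℝ) ^ (2 ^ m - 1) :=
      pow_le_pow_left₀ (by positivity) (by linarith) _
    have hle2 : ((2:ℝ)⁻¹) ^ (2 ^ m - 1) ≤ (2⁻¹ : ℝ) ^ m := by
      apply pow_le_pow_of_le_one (by norm_num) (by norm_num)
      have := Nat.lt_two_pow_self (n := m)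
      omega
    calc (η / 2 : ℝ) ^ (2 ^ m - 1) * (η / 2) ≤ (2⁻¹:ℝ) ^ m * (η / 2) := by
          apply mul_le_mul_of_nonneg_right (hle1.trans hle2) (by positivity)
      _ = (η / 2) * (2⁻¹:ℝ) ^ m := by ring
  have hgsum : Summable (fun m : ℕ => (η / 2) * (2⁻¹ : ℝ) ^ m) :=
    (summable_geometric_of_lt_one (by norm_num) (by norm_num)).mul_left _
  have hasum : Summable a := Summable.of_nonneg_of_le ha0 hgeom hgsum
  calc (∑' m, a m) ≤ ∑' m, (η / 2) * (2⁻¹ : ℝ) ^ m := hasum.tsum_le_tsum hgeom hgsum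
    _ = (η / 2) * (2 : ℝ) := by
        rw [tsum_mul_left, tsum_geometric_of_lt_one (by norm_num) (by norm_num)]
        norm_num
    _ = η := by ring
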